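/- Let G be a group in which every element of infinite order is conjugate to its square. Then G has property (NL): for every isometric action of G on a geodesic Gromov-hyperbolic metric space, no element of G is loxodromic. -/

import Mathlib

noncomputable section

open Metric

/-- The Gromov product of `x` and `y` at `w` with respect to a distance function `d`. -/
def gromovProd {α : Type*} (d : α → α → ℝ) (w x y : α) : ℝ :=
  (d w x + d w y - d x y) / 2

/-- Gromov hyperbolicity via the four-point condition, for an arbitrary distance function. -/
def FourPointHyperbolic {α : Type*} (d : α → α → ℝ) : Prop :=
  ∃ δ : ℝ, 0 ≤ δ ∧ ∀ w x y z : α,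
    min (gromovProd d w x z) (gromovProd d w z y) - δ ≤ gromovProd d w x y

/-- A geodesic from `x` to `y`, parametrized by arc length on `[0, dist x y]`. -/
def IsGeodesicSeg {X : Type*} [MetricSpace X] (x y : X) (f : ℝ → X) : Prop :=
  f 0 = x ∧ f (dist x y) = y ∧
    ∀ s ∈ Set.Icc (0 : ℝ) (dist x y), ∀ t ∈ Set.Icc (0 : ℝ) (dist x y),
      dist (f s) (f t) = |s - t|

/-- A geodesic metric space: any two points are joined by a geodesic. -/
def GeodesicSpace (X : Type*) [MetricSpace X] : Prop :=
  ∀ x y : X, ∃ f : ℝ → X, IsGeodesicSeg x y f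

/-- The image (as a set) of a geodesic segment from `x` to `y`. -/
def geodSet {X : Type*} [MetricSpace X] (x y : X) (f : ℝ → X) : Set X :=
  f '' Set.Icc (0 : ℝ) (dist x y)

/-- `p` lies within distance `δ` of the set `S` (i.e. in the closed `δ`-neighborhood). -/
def WithinDistOf {X : Type*} [MetricSpace X] (δ : ℝ) (p : X) (S : Set X) : Prop :=
  ∃ q ∈ S, dist p q ≤ δ

/-- Rips condition: each side of every geodesic triangle is contained in the union of the
closed `δ`-neighborhoods of the other two sides. -/
def RipsHyperbolic (X : Type*) [MetricSpace X] (δ : ℝ) : Prop :=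
  ∀ x y z : X, ∀ fxy fyz fxz : ℝ → X,
    IsGeodesicSeg x y fxy → IsGeodesicSeg y z fyz → IsGeodesicSeg x z fxz →
      (∀ p ∈ geodSet x y fxy, WithinDistOf δ p (geodSet y z fyz ∪ geodSet x z fxz)) ∧
      (∀ p ∈ geodSet y z fyz, WithinDistOf δ p (geodSet x y fxy ∪ geodSet x z fxz)) ∧
      (∀ p ∈ geodSet x z fxz, WithinDistOf δ p (geodSet x y fxy ∪ geodSet y z fyz))

/-- An (isometric) action of a group `G` on a metric space `X`. -/
structure IsIsomAction (G : Type*) [Group G] (X : Type*) [MetricSpace X]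
    (act : G → X → X) : Prop where
  act_one : ∀ x : X, act 1 x = x
  act_mul : ∀ (g h : G) (x : X), act (g * h) x = act g (act h x)
  isometry : ∀ (g : G) (x y : X), dist (act g x) (act g y) = dist x y

/-- A cobounded action: some (hence any) orbit is coarsely dense. -/
def CoboundedAction {G X : Type*} [Group G] [MetricSpace X] (act : G → X → X) : Prop :=
  ∃ (x : X) (R : ℝ), 0 ≤ R ∧ ∀ y : X, ∃ g : G, dist y (act g x) ≤ R

/-- A quasi-isometric embedding between two "spaces" given by distance functions. -/
def IsQIEmbWith {α β : Type*} (dα : α → α → ℝ) (dβ : β → β → ℝ) (f : α → β) : Prop :=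
  ∃ A B : ℝ, 1 ≤ A ∧ 0 ≤ B ∧ ∀ x y : α,
    dα x y / A - B ≤ dβ (f x) (f y) ∧ dβ (f x) (f y) ≤ A * dα x y + B

/-- The image of `f` is coarsely dense. -/
def CoarselyDenseWith {α β : Type*} (dβ : β → β → ℝ) (f : α → β) : Prop :=
  ∃ C : ℝ, 0 ≤ C ∧ ∀ y : β, ∃ x : α, dβ (f x) y ≤ C

/-- A quasi-isometry between two "spaces" given by distance functions. -/
def IsQuasiIsometryWith {α β : Type*} (dα : α → α → ℝ) (dβ : β → β → ℝ) (f : α → β) : Prop :=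
  IsQIEmbWith dα dβ f ∧ CoarselyDenseWith dβ f

/-- The standard distance on `ℤ`. -/
def zdist : ℤ → ℤ → ℝ := fun m n => |(m : ℝ) - (n : ℝ)|

/-- `g` is loxodromic for the action `act`: for some basepoint `x`, the orbit map
`n ↦ g ^ n • x` is a quasi-isometric embedding of `ℤ`. -/
def LoxodromicWith {G α : Type*} [Group G] (d : α → α → ℝ) (act : G → α → α) (g : G) : Prop :=
  ∃ x : α, IsQIEmbWith zdist d (fun n : ℤ => act (g ^ n) x)

/-- Acylindricity of an action, with respect to a distance function. -/
def AcylindricalWith {G α : Type*} (d : α → α → ℝ) (act : G → α → α) : Prop :=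
  ∀ ε : ℝ, 0 < ε → ∃ (R : ℝ) (N : ℕ), 0 ≤ R ∧ ∀ x y : α, R ≤ d x y →
    {g : G | d x (act g x) ≤ ε ∧ d y (act g y) ≤ ε}.Finite ∧
    Nat.card {g : G | d x (act g x) ≤ ε ∧ d y (act g y) ≤ ε} ≤ N

/-- Two subsets are within finite Hausdorff distance of each other. -/
def FinHausdorffClose {α : Type*} (d : α → α → ℝ) (A B : Set α) : Prop :=
  ∃ C : ℝ, (∀ a ∈ A, ∃ b ∈ B, d a b ≤ C) ∧ (∀ b ∈ B, ∃ a ∈ A, d a b ≤ C)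

/-- The positive (`pos = true`) or negative (`pos = false`) orbit ray of `g` at `x`. -/
def orbitRay {G α : Type*} [Group G] (act : G → α → α) (g : G) (x : α) (pos : Bool) : Set α :=
  Set.range fun n : ℕ => act (g ^ (if pos then (n : ℤ) else -(n : ℤ))) x

/-- Independence of two loxodromic elements with respect to the basepoint `x`: no orbit ray of
`g` is within finite Hausdorff distance of an orbit ray of `h`. -/
def IndepWith {G α : Type*} [Group G] (d : α → α → ℝ) (act : G → α → α) (x : α)
    (g h : G) : Prop :=
  ∀ s t : Bool, ¬ FinHausdorffClose d (orbitRay act g x s) (orbitRay act h x t)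

/-- A group is virtually cyclic if it has a cyclic subgroup of finite index. -/
def VirtuallyCyclic (G : Type*) [Group G] : Prop :=
  ∃ H : Subgroup G, IsCyclic ↥H ∧ H.FiniteIndex

/-- `S` is a generating set of `G`. -/
def IsGenSet {G : Type*} [Group G] (S : Set G) : Prop :=
  Subgroup.closure S = ⊤

/-- The word length of `g` with respect to `S`: the least `n` such that `g` is a product of
`n` elements of `S ∪ S⁻¹`. -/
def wordLength {G : Type*} [Group G] (S : Set G) (g : G) : ℕ :=
  sInf {n : ℕ | ∃ l : List G, l.length = n ∧ (∀ s ∈ l, s ∈ S ∨ s⁻¹ ∈ S) ∧ l.prod = g}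

/-- The word metric `d_S(g,h) = ‖g⁻¹h‖_S` on `G`. -/
def wordDist {G : Type*} [Group G] (S : Set G) : G → G → ℝ :=
  fun g h => (wordLength S (g⁻¹ * h) : ℝ)

/-- `S ⪯ T` : `S` is dominated by `T`, i.e. `sup_{t ∈ T} ‖t‖_S < ∞`. -/
def GenSetDominated {G : Type*} [Group G] (S T : Set G) : Prop :=
  ∃ M : ℕ, ∀ t ∈ T, wordLength S t ≤ M

/-- Equivalence of generating sets: mutual domination. -/
def GenSetEquiv {G : Type*} [Group G] (S T : Set G) : Prop :=
  GenSetDominated S T ∧ GenSetDominated T S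

/-- The left multiplication action of a group on itself. -/
def leftTranslation {G : Type*} [Group G] : G → G → G := fun g x => g * x

universe uX uG

/-- A bundled isometric action of `G` on a geodesic, δ-hyperbolic (Rips condition)
metric space. -/
structure GrpActHypSpace (G : Type uG) [Group G] : Type (max uG (uX + 1)) where
  carrier : Type uX
  [inst : MetricSpace carrier]
  act : G → carrier → carrier
  isIsomAction : IsIsomAction G carrier act
  δ : ℝ
  δ_nonneg : 0 ≤ δ
  geodesic : GeodesicSpace carrier
  rips : RipsHyperbolic carrier δ

attribute [instance] GrpActHypSpace.inst

/-- Property (NL): no isometric action of `G` on a geodesic Gromov-hyperbolic metric space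
has a loxodromic element. -/
def PropNL (G : Type uG) [Group G] : Prop :=
  ∀ A : GrpActHypSpace.{uX, uG} G, ∀ g : G,
    ¬ LoxodromicWith (fun a b : A.carrier => dist a b) A.act g

/-- An exponential lower bound cannot stay below a linear upper bound. -/
lemma no_exp_linear_bound {A B K D : ℝ} (hA : 1 ≤ A) (hB : 0 ≤ B) (hK : 0 ≤ K) (hD : 0 ≤ D)
    (h : ∀ n : ℕ, (2 : ℝ) ^ n / A - B ≤ 2 * n * K + D) : False := by
  have hA0 : (0 : ℝ) < A := lt_of_lt_of_le one_pos hA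
  obtain ⟨n, hn⟩ := pow_unbounded_of_one_lt (A * (4 * K + D + B)) (by norm_num : (1 : ℝ) < 2)
  obtain ⟨m, hm, hmC⟩ : ∃ m : ℕ, 1 ≤ m ∧ A * (4 * K + D + B) < 2 ^ m :=
    ⟨n + 1, Nat.le_add_left 1 n,
      lt_of_lt_of_le hn (pow_le_pow_right₀ (by norm_num) (Nat.le_succ n))⟩
  have h2 := h (2 * m)
  push_cast at h2
  have hm' : (1 : ℝ) ≤ (m : ℝ) := by exact_mod_cast hm
  have h5 : (m : ℝ) < 2 ^ m := by exact_mod_cast (Nat.lt_two_pow_self (n := m))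
  have hpos : (0 : ℝ) < (2 : ℝ) ^ m := by positivity
  have hsq : (2 : ℝ) ^ (2 * m) = 2 ^ m * 2 ^ m := by rw [two_mul, pow_add]
  rw [hsq] at h2
  have h3 : (2 : ℝ) ^ m * 2 ^ m ≤ A * (4 * (m : ℝ) * K + D + B) := by
    have hd : (2 : ℝ) ^ m * 2 ^ m / A ≤ 4 * (m : ℝ) * K + D + B := by linarith
    have := (div_le_iff₀ hA0).mp hd
    linarith
  have h4 : A * (4 * (m : ℝ) * K + D + B) ≤ (m : ℝ) * (A * (4 * K + D + B)) := by
    nlinarith [mul_nonneg (mul_nonneg hA0.le (add_nonneg hD hB))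
      (by linarith : (0 : ℝ) ≤ (m : ℝ) - 1)]
  have h6 : (m : ℝ) * (A * (4 * K + D + B)) < (m : ℝ) * 2 ^ m :=
    mul_lt_mul_of_pos_left hmC (by linarith)
  have h7 : (m : ℝ) * 2 ^ m < 2 ^ m * 2 ^ m := mul_lt_mul_of_pos_right h5 hpos
  linarith

/-- if every infinite order element of `G` is conjugate to its square,
then `G` has property (NL). -/
theorem stmt_10 {G : Type uG} [Group G]
    (h : ∀ g : G, ¬ IsOfFinOrder g → IsConj g (g ^ 2)) :
    PropNL.{uX, uG} G := by
  intro A g hlox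
  obtain ⟨x, A', B, hA1, hB0, hq⟩ := hlox
  set act := A.act with hact
  have act_one : ∀ y : A.carrier, act 1 y = y := A.isIsomAction.act_one
  have act_mul : ∀ (a b : G) (y : A.carrier), act (a * b) y = act a (act b y) :=
    A.isIsomAction.act_mul
  have act_iso : ∀ (a : G) (y z : A.carrier), dist (act a y) (act a z) = dist y z :=
    A.isIsomAction.isometry
  by_cases hfin : IsOfFinOrder g
  · -- finite order case: orbit is bounded, contradicting the QI lower bound
    obtain ⟨p, hp0, hp⟩ := isOfFinOrder_iff_pow_eq_one.mp hfin
    obtain ⟨k, hk⟩ := exists_nat_gt (A' * B)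
    have hpk : g ^ (((p * k : ℕ) : ℤ)) = 1 := by
      rw [zpow_natCast, pow_mul, hp, one_pow]
    have := (hq ((p * k : ℕ) : ℤ) 0).1
    dsimp only at this
    rw [hpk] at this
    simp only [zpow_zero, act_one] at this
    have hz : zdist ((p * k : ℕ) : ℤ) 0 = ((p * k : ℕ) : ℝ) := by
      simp only [zdist]
      push_cast
      rw [sub_zero, abs_of_nonneg (by positivity)]
    rw [hz, dist_self] at this
    -- (p*k)/A' - B ≤ 0, so p*k ≤ A'*B < k ≤ p*k
    have hA0 : (0 : ℝ) < A' := lt_of_lt_of_le one_pos hA1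
    have h1 : ((p * k : ℕ) : ℝ) ≤ A' * B := by
      have := (div_le_iff₀ hA0).mp (by linarith : ((p * k : ℕ) : ℝ) / A' ≤ B)
      linarith [this]
    have h2 : (k : ℝ) ≤ ((p * k : ℕ) : ℝ) := by
      have : k ≤ p * k := Nat.le_mul_of_pos_left k hp0
      exact_mod_cast this
    linarith
  · -- infinite order: g is conjugate to its square
    obtain ⟨c, hc⟩ := isConj_iff.mp (h g hfin)
    -- c^n * g * (c^n)⁻¹ = g ^ (2^n)
    have key : ∀ n : ℕ, c ^ n * g * (c ^ n)⁻¹ = g ^ (2 ^ n) := by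
      intro n
      induction n with
      | zero => simp
      | succ n ih =>
        have : c ^ (n + 1) * g * (c ^ (n + 1))⁻¹
            = c * (c ^ n * g * (c ^ n)⁻¹) * c⁻¹ := by
          rw [pow_succ']
          group
        rw [this, ih, ← conj_pow, hc, ← pow_mul, pow_succ']
    set K : ℝ := dist x (act c⁻¹ x) with hK
    set D : ℝ := dist x (act g x) with hD
    have hK0 : 0 ≤ K := dist_nonneg
    have hD0 : 0 ≤ D := dist_nonneg
    -- dist x (act (c⁻¹ ^ n) x) ≤ n * K
    have ray : ∀ n : ℕ, dist x (act (c⁻¹ ^ n) x) ≤ n * K := by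
      intro n
      induction n with
      | zero => simp [act_one]
      | succ n ih =>
        have e : act (c⁻¹ ^ (n + 1)) x = act c⁻¹ (act (c⁻¹ ^ n) x) := by
          rw [pow_succ', act_mul]
        calc dist x (act (c⁻¹ ^ (n + 1)) x)
            ≤ dist x (act c⁻¹ x) + dist (act c⁻¹ x) (act (c⁻¹ ^ (n + 1)) x) :=
              dist_triangle _ _ _
          _ = K + dist (act c⁻¹ x) (act c⁻¹ (act (c⁻¹ ^ n) x)) := by rw [e, hK]
          _ = K + dist x (act (c⁻¹ ^ n) x) := by rw [act_iso]
          _ ≤ K + n * K := by linarith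
          _ = (n + 1 : ℕ) * K := by push_cast; ring
    -- upper bound: dist x (act (g ^ 2^n) x) ≤ 2 n K + D
    have upper : ∀ n : ℕ, dist x (act (g ^ (2 ^ n : ℕ)) x) ≤ 2 * n * K + D := by
      intro n
      set y : A.carrier := act (c⁻¹ ^ n) x with hy
      have hx : act (c ^ n) y = x := by
        rw [hy, ← act_mul, inv_pow, mul_inv_cancel, act_one]
      have e : act (g ^ (2 ^ n : ℕ)) x = act (c ^ n) (act g y) := by
        rw [← key n, act_mul, act_mul, ← inv_pow, ← hy]
      calc dist x (act (g ^ (2 ^ n : ℕ)) x)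
          = dist (act (c ^ n) y) (act (c ^ n) (act g y)) := by rw [hx, e]
        _ = dist y (act g y) := act_iso _ _ _
        _ ≤ dist y x + dist x (act g x) + dist (act g x) (act g y) :=
            dist_triangle4 _ _ _ _
        _ = dist x y + D + dist x y := by rw [dist_comm y x, act_iso, hD]
        _ ≤ n * K + D + n * K := by have := ray n; rw [← hy] at this; linarith
        _ = 2 * n * K + D := by ring
    -- lower bound from the QI embedding
    apply no_exp_linear_bound hA1 hB0 hK0 hD0
    intro n
    have hzp : g ^ (((2 ^ n : ℕ) : ℤ)) = g ^ (2 ^ n : ℕ) := zpow_natCast g _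
    have := (hq ((2 ^ n : ℕ) : ℤ) 0).1
    dsimp only at this
    rw [hzp] at this
    simp only [zpow_zero, act_one] at this
    have hz : zdist ((2 ^ n : ℕ) : ℤ) 0 = (2 : ℝ) ^ n := by
      simp [zdist, abs_of_nonneg]
    rw [hz] at this
    have hub := upper n
    calc (2 : ℝ) ^ n / A' - B ≤ dist (act (g ^ (2 ^ n : ℕ)) x) x := this
      _ = dist x (act (g ^ (2 ^ n : ℕ)) x) := dist_comm _ _
      _ ≤ 2 * n * K + D := hub
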